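/- Let N be a d-small FS^op-module and let S be any finite set. Define the FS^op-module N_S by N_S(E) := N(S ⊔ E) for every nonempty finite set E, with the structure map for a surjection g: E ↠ F given by the structure map of N induced by the surjection id_S ⊔ g: S ⊔ E ↠ S ⊔ F. Then N_S is also d-small. -/

import Mathlib

open CategoryTheory

/-- An object of the category `FS`: a nonempty finite set. -/
structure FSObj : Type 1 where
  carrier : Type
  [fintype : Fintype carrier]
  [nonempty : Nonempty carrier]

attribute [instance] FSObj.fintype FSObj.nonempty

instance : CoeSort FSObj Type := ⟨FSObj.carrier⟩

/-- The category `FS` of nonempty finite sets with surjective maps. -/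
instance : Category FSObj where
  Hom A B := {f : A → B // Function.Surjective f}
  id A := ⟨id, Function.surjective_id⟩
  comp f g := ⟨g.1 ∘ f.1, g.2.comp f.2⟩

/-- The standard object `[n] = {1, …, n}` of `FS`, modeled as `Fin n`, for `n ≥ 1`. -/
def FSn (n : ℕ) [NeZero n] : FSObj := ⟨Fin n⟩

/-- An `FSᵒᵖ`-module: a contravariant functor from `FS` to complex vector spaces. -/
abbrev FSopModule : Type 1 := FSObjᵒᵖ ⥤ ModuleCat.{0} ℂ

/-- The value `N(n) := N([n])` of an `FSᵒᵖ`-module at `[n]`, as a representation of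
the symmetric group `S_n = Aut([n])`. -/
def FSopModule.val (N : FSopModule) (n : ℕ) [NeZero n] : ModuleCat ℂ :=
  N.obj (Opposite.op (FSn n))

/-- The dimension of `N([n])`, with the junk value `0` when `n = 0`. -/
noncomputable def FSopModule.dim (N : FSopModule) : ℕ → ℕ
  | 0 => 0
  | (n + 1) => Module.finrank ℂ (N.val (n + 1))

/-- The principal projective `FSᵒᵖ`-module at an object `A`, sending a finite set `E` to
the complex vector space with basis the set of surjections `E ↠ A`.  The principal
projective `P_m` of the paper is `PP (FSn m)`. -/
@[simps]
noncomputable def PP (A : FSObj) : FSopModule where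
  obj E := ModuleCat.of ℂ ((E.unop ⟶ A) →₀ ℂ)
  map {E E'} g := ModuleCat.ofHom (Finsupp.lmapDomain ℂ ℂ (fun f => g.unop ≫ f))
  map_id _ := ModuleCat.hom_ext (LinearMap.ext fun _ => Finsupp.mapDomain_id)
  map_comp g h := ModuleCat.hom_ext (LinearMap.ext fun _ =>
    (Finsupp.mapDomain_comp (f := fun f => g.unop ≫ f) (g := fun f => h.unop ≫ f)))

/-- The object `[m]` together with a positivity proof. -/
def finObj (m : ℕ) (h : 1 ≤ m) : FSObj :=
  { carrier := Fin m, nonempty := ⟨⟨0, h⟩⟩ }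

/-- An `FSᵒᵖ`-module is finitely generated in degrees `≤ d` if it is the quotient of a
finite direct sum of principal projectives `P_m` with `m ≤ d`; equivalently, if there is
a finite family of maps from such principal projectives whose images jointly span. -/
def FinGenLE (d : ℕ) (N : FSopModule) : Prop :=
  ∃ (k : ℕ) (m : Fin k → ℕ) (hm : ∀ i, 1 ≤ m i ∧ m i ≤ d)
    (T : ∀ i : Fin k, PP (finObj (m i) (hm i).1) ⟶ N),
    ∀ E : FSObjᵒᵖ, (⨆ i : Fin k, LinearMap.range ((T i).app E).hom) = ⊤

/-- An `FSᵒᵖ`-module is `d`-small if it is a subquotient of an `FSᵒᵖ`-module that is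
finitely generated in degrees `≤ d`. -/
def IsSmall (d : ℕ) (N : FSopModule) : Prop :=
  ∃ (M M₀ : FSopModule) (_ : FinGenLE d M) (ι : M₀ ⟶ M) (π : M₀ ⟶ N),
    (∀ E : FSObjᵒᵖ, Function.Injective (ι.app E)) ∧
    (∀ E : FSObjᵒᵖ, Function.Surjective (π.app E))
/-- The object `S ⊔ E` of `FS`, for a finite set `S` and `E : FSObj`. -/
def sumObj (S : Type) [Fintype S] (E : FSObj) : FSObj := ⟨S ⊕ E⟩

/-- The surjection `id_S ⊔ g : S ⊔ E ↠ S ⊔ F` induced by a surjection `g : E ↠ F`. -/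
def sumHom (S : Type) [Fintype S] {E F : FSObj} (g : E ⟶ F) : sumObj S E ⟶ sumObj S F :=
  ⟨Sum.map id g.1, Function.surjective_id.sumMap g.2⟩

/-- The shift of an `FSᵒᵖ`-module `N` by a finite set `S`: the `FSᵒᵖ`-module
`N_S` with `N_S(E) := N(S ⊔ E)`, whose structure map for a surjection `g : E ↠ F`
is the structure map of `N` induced by `id_S ⊔ g : S ⊔ E ↠ S ⊔ F`. -/
def shiftFS (S : Type) [Fintype S] (N : FSopModule) : FSopModule where
  obj E := N.obj (Opposite.op (sumObj S E.unop))
  map {E F} φ := N.map (Quiver.Hom.op (sumHom S φ.unop))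
  map_id E := by
    have h : sumHom S (𝟙 E.unop) = 𝟙 (sumObj S E.unop) :=
      Subtype.ext (funext fun x => by cases x <;> rfl)
    show N.map (sumHom S (𝟙 E).unop).op = 𝟙 _
    rw [CategoryTheory.unop_id, h, CategoryTheory.op_id, N.map_id]
  map_comp {E F G} φ ψ := by
    have h : sumHom S ((φ ≫ ψ).unop) = sumHom S ψ.unop ≫ sumHom S φ.unop :=
      Subtype.ext (funext fun x => by cases x <;> rfl)
    show N.map (sumHom S (φ ≫ ψ).unop).op =
      N.map (sumHom S φ.unop).op ≫ N.map (sumHom S ψ.unop).op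
    rw [h, CategoryTheory.op_comp, N.map_comp]


section Aux

/-- `sumHom` is functorial. -/
lemma sumHom_comp (S : Type) [Fintype S] {E F G : FSObj} (g : E ⟶ F) (g' : F ⟶ G) :
    sumHom S (g ≫ g') = sumHom S g ≫ sumHom S g' :=
  Subtype.ext (funext fun x => by cases x <;> rfl)

/-- The shift of a natural transformation. -/
def shiftNat (S : Type) [Fintype S] {M N : FSopModule} (T : M ⟶ N) :
    shiftFS S M ⟶ shiftFS S N where
  app E := T.app (Opposite.op (sumObj S E.unop))
  naturality E F φ := T.naturality (Quiver.Hom.op (sumHom S φ.unop))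

/-- The natural transformation `PP A ⟶ shiftFS S (PP B)` attached to a surjection
`h : S ⊔ A ↠ B`. -/
noncomputable def sigmaHom (S : Type) [Fintype S] {A B : FSObj}
    (h : sumObj S A ⟶ B) : PP A ⟶ shiftFS S (PP B) where
  app E := ModuleCat.ofHom (Finsupp.lmapDomain ℂ ℂ (fun f : E.unop ⟶ A => sumHom S f ≫ h))
  naturality E F φ := ModuleCat.hom_ext (Finsupp.lhom_ext fun f c => by
    show Finsupp.mapDomain _ (Finsupp.mapDomain _ _) =
      Finsupp.mapDomain _ (Finsupp.mapDomain _ _)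
    simp only [Finsupp.mapDomain_single]
    rw [sumHom_comp, Category.assoc]
    rfl)

/-- A version of `FinGenLE` with an arbitrary finite index type. -/
lemma finGenLE_of_finite (d : ℕ) (N : FSopModule) (I : Type) [Finite I]
    (m : I → ℕ) (hm : ∀ i, 1 ≤ m i ∧ m i ≤ d)
    (T : ∀ i : I, PP (finObj (m i) (hm i).1) ⟶ N)
    (hT : ∀ E : FSObjᵒᵖ, (⨆ i : I, LinearMap.range ((T i).app E).hom) = ⊤) :
    FinGenLE d N := by
  obtain ⟨k, ⟨e⟩⟩ := Finite.exists_equiv_fin I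
  refine ⟨k, m ∘ e.symm, fun j => hm (e.symm j), fun j => T (e.symm j), fun E => ?_⟩
  rw [← hT E]
  exact le_antisymm (iSup_le fun j => le_iSup (fun i => LinearMap.range ((T i).app E).hom) _)
    (iSup_le fun i => by
      have h2 := le_iSup (fun j => LinearMap.range ((T (e.symm j)).app E).hom) (e i)
      rwa [Equiv.symm_apply_apply] at h2)

/-- Key surjectivity: any surjection `k : S ⊔ E ↠ B` factors as `(id ⊔ f) ≫ h` with
`f : E ↠ [n]` and `h : S ⊔ [n] ↠ B`, where `n` is the cardinality of the image of
`k` restricted to `E`. -/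
lemma exists_factor (S : Type) [Fintype S] {E : FSObj} {B : FSObj}
    (k : sumObj S E ⟶ B) :
    ∃ (n : ℕ) (hn : 1 ≤ n) (hle : n ≤ Fintype.card B.carrier)
      (f : E ⟶ finObj n hn) (h : sumObj S (finObj n hn) ⟶ B),
      sumHom S f ≫ h = k := by
  classical
  let t : Finset B.carrier := Finset.image (fun e : E.carrier => k.1 (Sum.inr e)) Finset.univ
  have htmem : ∀ e : E.carrier, k.1 (Sum.inr e) ∈ t := fun e =>
    Finset.mem_image_of_mem _ (Finset.mem_univ e)
  obtain ⟨e₀⟩ := E.nonempty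
  have hcard : 1 ≤ t.card := Finset.card_pos.2 ⟨_, htmem e₀⟩
  have hle : t.card ≤ Fintype.card B.carrier := by
    simpa using Finset.card_le_card (Finset.subset_univ t)
  let b : {x // x ∈ t} ≃ Fin t.card := t.equivFin
  refine ⟨t.card, hcard, hle, ⟨fun e => b ⟨k.1 (Sum.inr e), htmem e⟩, ?_⟩,
    ⟨Sum.elim (fun s => k.1 (Sum.inl s)) (fun j => (b.symm j : B.carrier)), ?_⟩, ?_⟩
  · intro j
    obtain ⟨e, -, he⟩ := Finset.mem_image.1 (b.symm j).2
    refine ⟨e, ?_⟩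
    show b ⟨k.1 (Sum.inr e), htmem e⟩ = j
    have h2 : (⟨k.1 (Sum.inr e), htmem e⟩ : {x // x ∈ t}) = b.symm j := Subtype.ext he
    rw [h2]
    exact b.apply_symm_apply j
  · intro x
    obtain ⟨y, hy⟩ := k.2 x
    cases y with
    | inl s => exact ⟨Sum.inl s, hy⟩
    | inr e =>
      refine ⟨Sum.inr (b ⟨x, hy ▸ htmem e⟩), ?_⟩
      show (b.symm (b ⟨x, _⟩) : B.carrier) = x
      rw [Equiv.symm_apply_apply]
  · refine Subtype.ext (funext fun y => ?_)
    cases y with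
    | inl s => rfl
    | inr e =>
      show (b.symm (b ⟨k.1 (Sum.inr e), htmem e⟩) : B.carrier) = k.1 (Sum.inr e)
      rw [Equiv.symm_apply_apply]

/-- Shifting preserves finite generation in degrees `≤ d`. -/
lemma finGenLE_shiftFS (d : ℕ) (M : FSopModule) (hM : FinGenLE d M)
    (S : Type) [Fintype S] : FinGenLE d (shiftFS S M) := by
  classical
  obtain ⟨k, m, hm, T, hT⟩ := hM
  -- index type: a generator index, a degree `1 ≤ n ≤ m i`, and a surjection `S ⊔ [n] ↠ [m i]`
  let I : Type := Σ (i : Fin k) (n : {n : ℕ // 1 ≤ n ∧ n ≤ m i}),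
    (sumObj S (finObj n.1 n.2.1) ⟶ finObj (m i) (hm i).1)
  haveI : ∀ (i : Fin k) (n : {n : ℕ // 1 ≤ n ∧ n ≤ m i}), Finite
      (sumObj S (finObj n.1 n.2.1) ⟶ finObj (m i) (hm i).1) := fun i n => Subtype.finite
  haveI : ∀ i : Fin k, Finite {n : ℕ // 1 ≤ n ∧ n ≤ m i} := fun i =>
    Finite.of_injective (fun n => (⟨n.1, Nat.lt_succ_of_le n.2.2⟩ : Fin (m i + 1)))
      (fun a b hab => Subtype.ext (by simpa using congrArg Fin.val hab))
  haveI hIfin : Finite I := inferInstance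
  refine finGenLE_of_finite d (shiftFS S M) I (fun x => x.2.1.1)
    (fun x => ⟨x.2.1.2.1, le_trans x.2.1.2.2 (hm x.1).2⟩)
    (fun x => sigmaHom S x.2.2 ≫ shiftNat S (T x.1)) (fun E => ?_)
  rw [eq_top_iff]
  intro v _
  -- `v` lives in `M (S ⊔ E)`; use the generation of `M` there.
  have hv : v ∈ ⨆ i : Fin k, LinearMap.range ((T i).app (Opposite.op (sumObj S E.unop))).hom := by
    rw [hT]; trivial
  refine Submodule.iSup_induction _ (motive := fun w => w ∈
    ⨆ x : I, LinearMap.range (((fun x : I =>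
      sigmaHom S x.2.2 ≫ shiftNat S (T x.1)) x).app E).hom) hv ?_ (Submodule.zero_mem _)
    (fun _ _ => Submodule.add_mem _)
  rintro i w ⟨z, rfl⟩
  -- reduce to basis elements of `PP [m i] (S ⊔ E)` by Finsupp induction
  induction z using Finsupp.induction with
  | zero => erw [map_zero]; exact Submodule.zero_mem _
  | single_add κ c z _ _ ih =>
    erw [map_add]
    refine Submodule.add_mem _ ?_ ih
    -- `κ : sumObj S E.unop ⟶ finObj (m i) _` is a basis surjection
    obtain ⟨nn, hn1, hnle, f, h, hfac⟩ := exists_factor S κ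
    have hcard : Fintype.card (finObj (m i) (hm i).1).carrier = m i := Fintype.card_fin _
    rw [hcard] at hnle
    let x : I := ⟨i, ⟨nn, hn1, hnle⟩, h⟩
    refine le_iSup (fun x : I => LinearMap.range (((fun x : I =>
      sigmaHom S x.2.2 ≫ shiftNat S (T x.1)) x).app E).hom) x ?_
    refine ⟨Finsupp.single f c, ?_⟩
    show ((T i).app _).hom (((sigmaHom S x.2.2).app E).hom (Finsupp.single f c)) =
      ((T i).app _).hom (Finsupp.single κ c)
    congr 1
    show Finsupp.mapDomain _ (Finsupp.single _ c) = Finsupp.single κ c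
    rw [Finsupp.mapDomain_single]
    congr 1

end Aux

/-- shift functors preserve smallness: if `N` is a `d`-small
`FSᵒᵖ`-module and `S` is any finite set, then the shifted `FSᵒᵖ`-module
`N_S : E ↦ N(S ⊔ E)` is also `d`-small. -/
theorem isSmall_shiftFS (d : ℕ) (N : FSopModule) (hN : IsSmall d N)
    (S : Type) [Fintype S] : IsSmall d (shiftFS S N) := by
  obtain ⟨M, M₀, hfg, ι, π, hι, hπ⟩ := hN
  exact ⟨shiftFS S M, shiftFS S M₀, finGenLE_shiftFS d M hfg S, shiftNat S ι, shiftNat S π,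
    fun E => hι _, fun E => hπ _⟩
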